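/- Let λ be a Young diagram and let c = (i,j) be a cell of λ. Define H_c = {(a,b) ∈ λ : a ≥ i, b ≥ j, and (a+1,b+1) ∉ λ}. Then the set difference λ \ H_c is again a Young diagram; that is, there exists a Young diagram μ whose set of cells equals the cells of λ minus H_c. -/
import Mathlib


/-- The rim hook of a Young diagram `μ` at a cell `c = (i, j)`:
the set of cells `(a, b) ∈ μ` with `a ≥ i`, `b ≥ j` and `(a+1, b+1) ∉ μ`. -/
def YoungDiagram.rimHook (μ : YoungDiagram) (c : ℕ × ℕ) : Finset (ℕ × ℕ) :=
  μ.cells.filter (fun x => c.1 ≤ x.1 ∧ c.2 ≤ x.2 ∧ (x.1 + 1, x.2 + 1) ∉ μ.cells)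

/-- **Removing a rim hook from a Young diagram leaves a Young diagram.**
For any cell `c = (i, j)` of `μ`, there is a Young diagram `ν` whose set of cells
is the set of cells of `μ` minus the rim hook of `μ` at `c`. -/
theorem exists_youngDiagram_cells_eq_sdiff_rimHook (μ : YoungDiagram) (i j : ℕ)
    (hc : (i, j) ∈ μ) :
    ∃ ν : YoungDiagram, ν.cells = μ.cells \ μ.rimHook (i, j) := by
  refine ⟨⟨μ.cells \ μ.rimHook (i, j), ?_⟩, rfl⟩
  intro p q hq hp
  simp only [Finset.coe_sdiff, Set.mem_diff, Finset.mem_coe, Finset.mem_filter,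
    YoungDiagram.rimHook, YoungDiagram.mem_cells, not_and, not_not] at hp ⊢
  obtain ⟨hpμ, hpH⟩ := hp
  have hqμ : q ∈ μ := μ.isLowerSet hq hpμ
  refine ⟨hqμ, fun _ hi hj => ?_⟩
  have hp1 : (p.1 + 1, p.2 + 1) ∈ μ :=
    hpH hpμ (hi.trans hq.1) (hj.trans hq.2)
  exact μ.isLowerSet ⟨Nat.add_le_add_right hq.1 1, Nat.add_le_add_right hq.2 1⟩ hp1
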